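/- For any $0 < s < 1$ and any compact interval $I = [a,b] \subset \mathbb{R}$, there exists a constant $C = C(s, a, b)$ such that for every probability measure $\mu$ on $\mathbb{R}$ and every $\eta \geq 0$, $\int_I |g_\mu(\lambda + i\eta)|^s \, d\lambda \leq C$, where for $\eta = 0$ the boundary value $g_\mu(\lambda + i0) = \lim_{t \downarrow 0} g_\mu(\lambda + it)$ is used (it exists for Lebesgue-almost every $\lambda$). -/

import Mathlib

open MeasureTheory Complex Filter Topology

/-- The Cauchy–Stieltjes transform `g_μ(z) = ∫ (λ - z)⁻¹ dμ(λ)`. -/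
noncomputable def stieltjes (μ : Measure ℝ) (z : ℂ) : ℂ := ∫ x, ((x : ℂ) - z)⁻¹ ∂μ

noncomputable def stjh (μ : Measure ℝ) (s : ℝ) (z : ℂ) : ℂ :=
  Complex.exp ((s : ℂ) * (Complex.log (stieltjes μ z) - (↑(Real.pi) / 2) * I))

section helpers

variable {μ : Measure ℝ} [IsProbabilityMeasure μ]

lemma stj_sub_ne {z : ℂ} (hz : 0 < z.im) (x : ℝ) : ((x : ℂ) - z) ≠ 0 := by
  intro h
  have h2 : ((x : ℂ) - z).im = 0 := by rw [h]; simp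
  simp only [Complex.sub_im, Complex.ofReal_im, zero_sub, neg_eq_zero] at h2
  linarith

lemma stj_norm_inv_le {z : ℂ} (hz : 0 < z.im) (x : ℝ) : ‖((x : ℂ) - z)⁻¹‖ ≤ z.im⁻¹ := by
  rw [norm_inv]
  have h1 : z.im ≤ ‖(x : ℂ) - z‖ := by
    calc z.im = |((x : ℂ) - z).im| := by
          simp [Complex.sub_im, abs_of_nonpos, hz.le]
      _ ≤ ‖(x : ℂ) - z‖ := Complex.abs_im_le_norm _
  exact inv_anti₀ hz h1

lemma stj_cont {z : ℂ} (hz : 0 < z.im) : Continuous (fun x : ℝ => ((x : ℂ) - z)⁻¹) :=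
  (Complex.continuous_ofReal.sub continuous_const).inv₀ fun x => stj_sub_ne hz x

lemma stj_integrable {z : ℂ} (hz : 0 < z.im) :
    Integrable (fun x : ℝ => ((x : ℂ) - z)⁻¹) μ := by
  refine (integrable_const (z.im⁻¹)).mono' ((stj_cont hz).aestronglyMeasurable) ?_
  exact Eventually.of_forall fun x => stj_norm_inv_le hz x

lemma stj_norm_le {z : ℂ} (hz : 0 < z.im) :
    ‖∫ x, ((x : ℂ) - z)⁻¹ ∂μ‖ ≤ z.im⁻¹ := by
  have := norm_integral_le_of_norm_le_const (μ := μ)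
    (f := fun x : ℝ => ((x : ℂ) - z)⁻¹) (C := z.im⁻¹)
    (Eventually.of_forall fun x => stj_norm_inv_le hz x)
  simpa using this

lemma stj_im_pos {z : ℂ} (hz : 0 < z.im) :
    0 < (∫ x, ((x : ℂ) - z)⁻¹ ∂μ).im := by
  have hint := stj_integrable (μ := μ) hz
  have him_eq : (∫ x, ((x : ℂ) - z)⁻¹ ∂μ).im = ∫ x, (((x : ℂ) - z)⁻¹).im ∂μ := by
    have := ContinuousLinearMap.integral_comp_comm Complex.imCLM hint
    simpa using this.symm
  rw [him_eq]
  have him : ∀ x : ℝ, 0 < (((x : ℂ) - z)⁻¹).im := by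
    intro x
    rw [Complex.inv_im]
    have hns : 0 < Complex.normSq ((x : ℂ) - z) :=
      Complex.normSq_pos.2 (stj_sub_ne hz x)
    have : ((x : ℂ) - z).im = -z.im := by simp
    rw [this, neg_neg]
    positivity
  have hii : Integrable (fun x : ℝ => (((x : ℂ) - z)⁻¹).im) μ := hint.im
  rw [integral_pos_iff_support_of_nonneg (fun x => (him x).le) hii]
  have : Function.support (fun x : ℝ => (((x : ℂ) - z)⁻¹).im) = Set.univ := by
    ext x
    simp only [Function.mem_support, Set.mem_univ, iff_true]
    exact (him x).ne'
  rw [this]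
  simp [IsProbabilityMeasure.ne_zero μ]


lemma stj_diffAt {z : ℂ} (hz : 0 < z.im) :
    DifferentiableAt ℂ (fun w => ∫ x, ((x : ℂ) - w)⁻¹ ∂μ) z := by
  set ε := z.im / 2 with hεdef
  have hεpos : 0 < ε := by positivity
  have hball : ∀ w ∈ Metric.ball z ε, ε < w.im := by
    intro w hw
    have h1 : |w.im - z.im| < ε := by
      have h2 : |(w - z).im| ≤ ‖w - z‖ := Complex.abs_im_le_norm _
      have h3 : ‖w - z‖ < ε := by
        rwa [Metric.mem_ball, Complex.dist_eq] at hw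
      simpa [Complex.sub_im] using lt_of_le_of_lt h2 h3
    have := abs_lt.1 h1
    have : z.im - ε < w.im := by linarith [this.1]
    have hz2 : z.im = 2 * ε := by rw [hεdef]; ring
    linarith
  have key := hasDerivAt_integral_of_dominated_loc_of_deriv_le (μ := μ) (𝕜 := ℂ)
    (F := fun (w : ℂ) (x : ℝ) => ((x : ℂ) - w)⁻¹)
    (F' := fun (w : ℂ) (x : ℝ) => (((x : ℂ) - w) ^ 2)⁻¹)
    (x₀ := z) (bound := fun _ => (ε ^ 2)⁻¹) (s := Metric.ball z ε) (Metric.ball_mem_nhds z hεpos)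
    ?_ (stj_integrable hz) ?_ ?_ (integrable_const _) ?_
  · exact key.2.differentiableAt
  · refine Filter.eventually_of_mem (Metric.ball_mem_nhds z hεpos) fun w hw => ?_
    exact (stj_cont (lt_trans hεpos (hball w hw))).aestronglyMeasurable
  · have hc : Continuous (fun x : ℝ => (((x : ℂ) - z) ^ 2)⁻¹) := by
      refine ((Complex.continuous_ofReal.sub continuous_const).pow 2).inv₀ fun x => ?_
      exact pow_ne_zero _ (stj_sub_ne hz x)
    exact hc.aestronglyMeasurable
  · refine Eventually.of_forall fun x => fun w hw => ?_
    have h1 : ε ≤ ‖(x : ℂ) - w‖ := by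
      have h2 : |((x : ℂ) - w).im| ≤ ‖(x : ℂ) - w‖ := Complex.abs_im_le_norm _
      have h3 : |((x : ℂ) - w).im| = w.im := by
        simp [Complex.sub_im, abs_of_nonpos, (lt_trans hεpos (hball w hw)).le]
      calc ε ≤ w.im := (hball w hw).le
        _ = |((x : ℂ) - w).im| := h3.symm
        _ ≤ ‖(x : ℂ) - w‖ := h2
    rw [norm_inv, norm_pow]
    have : ε ^ 2 ≤ ‖(x : ℂ) - w‖ ^ 2 := by
      exact pow_le_pow_left₀ hεpos.le h1 2
    exact inv_anti₀ (by positivity) this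
  · refine Eventually.of_forall fun x => fun w hw => ?_
    have hne : (x : ℂ) - w ≠ 0 := stj_sub_ne (lt_trans hεpos (hball w hw)) x
    have h1 : HasDerivAt (fun w : ℂ => (x : ℂ) - w) (-1) w := by
      simpa using (hasDerivAt_id w).const_sub ((x : ℂ))
    have h2 := h1.inv hne
    convert h2 using 1
    · rfl
    · rfl
    · simp


lemma stj_ne_zero {z : ℂ} (hz : 0 < z.im) : stieltjes μ z ≠ 0 := by
  intro h
  have := stj_im_pos (μ := μ) hz
  rw [show (∫ x, ((x : ℂ) - z)⁻¹ ∂μ) = stieltjes μ z from rfl, h] at this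
  simp at this

lemma stjh_diffAt {s : ℝ} {z : ℂ} (hz : 0 < z.im) :
    DifferentiableAt ℂ (stjh μ s) z := by
  have hslit : stieltjes μ z ∈ Complex.slitPlane :=
    Complex.mem_slitPlane_iff.2 (Or.inr (stj_im_pos (μ := μ) hz).ne')
  have h1 : DifferentiableAt ℂ (fun w => Complex.log (stieltjes μ w)) z :=
    (Complex.differentiableAt_log hslit).comp z (stj_diffAt hz)
  exact (((h1.sub_const _).const_mul _).cexp)

lemma stjh_re {s : ℝ} {z : ℂ} (hz : 0 < z.im) :
    (stjh μ s z).re =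
      ‖stieltjes μ z‖ ^ s * Real.cos (s * (Complex.arg (stieltjes μ z) - Real.pi / 2)) := by
  have hne := stj_ne_zero (μ := μ) hz
  have hpos : 0 < ‖stieltjes μ z‖ := norm_pos_iff.2 hne
  rw [stjh, Complex.exp_re]
  have hre : ((s : ℂ) * (Complex.log (stieltjes μ z) - (↑(Real.pi) / 2) * I)).re
      = s * Real.log ‖stieltjes μ z‖ := by
    simp [Complex.mul_re, Complex.sub_re, Complex.log_re, Complex.sub_im]
  have him : ((s : ℂ) * (Complex.log (stieltjes μ z) - (↑(Real.pi) / 2) * I)).im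
      = s * (Complex.arg (stieltjes μ z) - Real.pi / 2) := by
    simp [Complex.mul_im, Complex.sub_im, Complex.log_im, Complex.sub_re]
  rw [hre, him]
  congr 1
  rw [Real.rpow_def_of_pos hpos, mul_comm]

lemma stjh_norm {s : ℝ} {z : ℂ} (hz : 0 < z.im) :
    ‖stjh μ s z‖ = ‖stieltjes μ z‖ ^ s := by
  have hne := stj_ne_zero (μ := μ) hz
  have hpos : 0 < ‖stieltjes μ z‖ := norm_pos_iff.2 hne
  rw [stjh, Complex.norm_exp]
  have hre : ((s : ℂ) * (Complex.log (stieltjes μ z) - (↑(Real.pi) / 2) * I)).re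
      = s * Real.log ‖stieltjes μ z‖ := by
    simp [Complex.mul_re, Complex.sub_re, Complex.log_re, Complex.sub_im]
  rw [hre, Real.rpow_def_of_pos hpos, mul_comm]

lemma stjh_norm_le {s : ℝ} (hs : 0 ≤ s) {z : ℂ} (hz : 0 < z.im) :
    ‖stjh μ s z‖ ≤ (z.im)⁻¹ ^ s := by
  rw [stjh_norm hz]
  exact Real.rpow_le_rpow (norm_nonneg _) (stj_norm_le hz) hs

lemma stjh_key {s : ℝ} (hs0 : 0 < s) (hs1 : s < 1) {z : ℂ} (hz : 0 < z.im) :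
    ‖stieltjes μ z‖ ^ s ≤ (Real.cos (s * (Real.pi / 2)))⁻¹ * (stjh μ s z).re := by
  have hπ := Real.pi_pos
  have hcpos : 0 < Real.cos (s * (Real.pi / 2)) := by
    apply Real.cos_pos_of_mem_Ioo
    constructor <;> nlinarith
  set θ := s * (Complex.arg (stieltjes μ z) - Real.pi / 2) with hθ
  have harg0 : 0 ≤ Complex.arg (stieltjes μ z) :=
    Complex.arg_nonneg_iff.2 (stj_im_pos (μ := μ) hz).le
  have hargπ : Complex.arg (stieltjes μ z) ≤ Real.pi := Complex.arg_le_pi _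
  have hθabs : |θ| ≤ s * (Real.pi / 2) := by
    rw [hθ, abs_mul, abs_of_pos hs0]
    have : |Complex.arg (stieltjes μ z) - Real.pi / 2| ≤ Real.pi / 2 := by
      rw [abs_le]; constructor <;> linarith
    exact mul_le_mul_of_nonneg_left this hs0.le
  have hcos : Real.cos (s * (Real.pi / 2)) ≤ Real.cos θ := by
    rw [← Real.cos_abs θ]
    apply Real.cos_le_cos_of_nonneg_of_le_pi (abs_nonneg _) (by nlinarith) hθabs
  rw [stjh_re hz, ← hθ]
  have hns : 0 ≤ ‖stieltjes μ z‖ ^ s := Real.rpow_nonneg (norm_nonneg _) s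
  have h1 : Real.cos (s * (Real.pi / 2)) * ‖stieltjes μ z‖ ^ s
      ≤ ‖stieltjes μ z‖ ^ s * Real.cos θ := by
    rw [mul_comm]
    exact mul_le_mul_of_nonneg_left hcos hns
  calc ‖stieltjes μ z‖ ^ s
      = (Real.cos (s * (Real.pi / 2)))⁻¹ *
        (Real.cos (s * (Real.pi / 2)) * ‖stieltjes μ z‖ ^ s) :=
        (inv_mul_cancel_left₀ hcpos.ne' _).symm
    _ ≤ _ := mul_le_mul_of_nonneg_left h1 (by positivity)


lemma stjS_norm_le {z : ℂ} (hz : 0 < z.im) : ‖stieltjes μ z‖ ≤ z.im⁻¹ := stj_norm_le hz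

lemma stjS_diffAt {z : ℂ} (hz : 0 < z.im) : DifferentiableAt ℂ (stieltjes μ) z := stj_diffAt hz

lemma stjS_contAt_line {t : ℝ} (c : ℝ) : Continuous (fun y : ℝ => (c : ℂ) + (y : ℂ) * I) :=
  continuous_const.add (Complex.continuous_ofReal.mul continuous_const)

lemma stjS_contAt_row (t : ℝ) : Continuous (fun x : ℝ => (x : ℂ) + (t : ℂ) * I) :=
  Complex.continuous_ofReal.add continuous_const

lemma stj_core {s : ℝ} (hs0 : 0 < s) (hs1 : s < 1) {a b η : ℝ} (hab : a ≤ b)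
    (hη0 : 0 < η) (hη1 : η ≤ 1) :
    ∫ x in a..b, ‖stieltjes μ ((x : ℂ) + (η : ℂ) * I)‖ ^ s ≤
      (Real.cos (s * (Real.pi / 2)))⁻¹ * ((b - a) + 2 / (1 - s)) := by
  have hπ := Real.pi_pos
  have hcpos : 0 < Real.cos (s * (Real.pi / 2)) := by
    apply Real.cos_pos_of_mem_Ioo
    constructor <;> nlinarith
  set c := (Real.cos (s * (Real.pi / 2)))⁻¹ with hc
  have hcnn : 0 ≤ c := inv_nonneg.2 hcpos.le
  -- differentiability on the rectangle
  have hdiff : DifferentiableOn ℂ (stjh μ s) (Set.uIcc a b ×ℂ Set.uIcc η 1) := by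
    intro p hp
    have hpim : 0 < p.im := by
      have h2 := (Complex.mem_reProdIm.1 hp).2
      rw [Set.uIcc_of_le hη1] at h2
      exact lt_of_lt_of_le hη0 h2.1
    exact (stjh_diffAt hpim).differentiableWithinAt
  have hrect : (∫ x in a..b, stjh μ s ((x : ℂ) + (η : ℂ) * I)) -
      (∫ x in a..b, stjh μ s ((x : ℂ) + ((1 : ℝ) : ℂ) * I)) +
      I • (∫ y in η..1, stjh μ s ((b : ℂ) + (y : ℂ) * I)) -
      I • (∫ y in η..1, stjh μ s ((a : ℂ) + (y : ℂ) * I)) = 0 :=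
    Complex.integral_boundary_rect_eq_zero_of_differentiableOn (stjh μ s) ⟨a, η⟩ ⟨b, 1⟩ hdiff
  set A := ∫ x in a..b, stjh μ s ((x : ℂ) + (η : ℂ) * I) with hA
  set B := ∫ x in a..b, stjh μ s ((x : ℂ) + ((1 : ℝ) : ℂ) * I) with hB
  set Cb := ∫ y in η..1, stjh μ s ((b : ℂ) + (y : ℂ) * I) with hCb
  set Ca := ∫ y in η..1, stjh μ s ((a : ℂ) + (y : ℂ) * I) with hCa
  have hAval : A = B - I • Cb + I • Ca := by
    have := hrect
    simp only [smul_eq_mul] at this ⊢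
    linear_combination this
  -- vertical side bounds
  have hvert : ∀ d : ℝ, ‖∫ y in η..1, stjh μ s ((d : ℂ) + (y : ℂ) * I)‖ ≤ 1 / (1 - s) := by
    intro d
    have hcm : ContinuousOn (fun y : ℝ => stjh μ s ((d : ℂ) + (y : ℂ) * I)) (Set.uIcc η 1) := by
      rw [Set.uIcc_of_le hη1]
      intro y hy
      have hyim : 0 < ((d : ℂ) + (y : ℂ) * I).im := by
        simp only [Complex.add_im, Complex.ofReal_im, Complex.mul_im, Complex.ofReal_re,
          Complex.I_im, Complex.I_re, mul_one, mul_zero, add_zero, zero_add]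
        linarith [hy.1]
      exact (ContinuousAt.comp (g := stjh μ s) (f := fun y : ℝ => (d : ℂ) + (y : ℂ) * I)
        (stjh_diffAt hyim).continuousAt
        (stjS_contAt_line (t := η) d).continuousAt).continuousWithinAt
    have hint1 : IntervalIntegrable (fun y : ℝ => ‖stjh μ s ((d : ℂ) + (y : ℂ) * I)‖)
        MeasureTheory.volume η 1 := hcm.intervalIntegrable.norm
    have hint2 : IntervalIntegrable (fun y : ℝ => y ^ (-s)) MeasureTheory.volume η 1 := by
      apply ContinuousOn.intervalIntegrable
      rw [Set.uIcc_of_le hη1]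
      intro y hy
      exact (Real.continuousAt_rpow_const y (-s)
        (Or.inl (ne_of_gt (lt_of_lt_of_le hη0 hy.1)))).continuousWithinAt
    calc ‖∫ y in η..1, stjh μ s ((d : ℂ) + (y : ℂ) * I)‖
        ≤ ∫ y in η..1, ‖stjh μ s ((d : ℂ) + (y : ℂ) * I)‖ :=
          intervalIntegral.norm_integral_le_integral_norm hη1
      _ ≤ ∫ y in η..1, y ^ (-s) := by
          apply intervalIntegral.integral_mono_on hη1 hint1 hint2
          intro y hy
          have hy0 : 0 < y := lt_of_lt_of_le hη0 hy.1
          have him' : ((d : ℂ) + (y : ℂ) * I).im = y := by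
            simp [Complex.add_im, Complex.mul_im]
          have hb1 := stjh_norm_le (μ := μ) hs0.le (show 0 < ((d : ℂ) + (y : ℂ) * I).im by
            rw [him']; exact hy0)
          rw [him'] at hb1
          calc ‖stjh μ s ((d : ℂ) + (y : ℂ) * I)‖ ≤ y⁻¹ ^ s := hb1
            _ = y ^ (-s) := by
                rw [Real.inv_rpow hy0.le, ← Real.rpow_neg hy0.le]
      _ = ((1 : ℝ) ^ (-s + 1) - η ^ (-s + 1)) / (-s + 1) :=
          integral_rpow (Or.inl (by linarith))
      _ ≤ 1 / (1 - s) := by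
          rw [Real.one_rpow]
          have h1 : (0:ℝ) ≤ η ^ (-s + 1) := Real.rpow_nonneg hη0.le _
          have h2 : (-s + 1) = 1 - s := by ring
          rw [h2] at h1 ⊢
          gcongr
          · linarith
  -- top bound
  have hhor : ‖B‖ ≤ b - a := by
    have hbd : ∀ x ∈ Set.uIoc a b, ‖stjh μ s ((x : ℂ) + ((1 : ℝ) : ℂ) * I)‖ ≤ 1 := by
      intro x hx
      have him1 : ((x : ℂ) + ((1 : ℝ) : ℂ) * I).im = 1 := by
        simp [Complex.add_im, Complex.mul_im]
      have hb1 := stjh_norm_le (μ := μ) hs0.le (show 0 < ((x : ℂ) + ((1 : ℝ) : ℂ) * I).im by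
        rw [him1]; norm_num)
      rw [him1] at hb1
      simpa using hb1
    have := intervalIntegral.norm_integral_le_of_norm_le_const hbd
    rw [_root_.abs_of_nonneg (sub_nonneg.2 hab), one_mul] at this
    exact this
  -- continuity of integrands on the bottom edge
  have hgcont : ContinuousOn (fun x : ℝ => stieltjes μ ((x : ℂ) + (η : ℂ) * I)) (Set.uIcc a b) := by
    intro x hx
    have hxim : 0 < ((x : ℂ) + (η : ℂ) * I).im := by
      simp [Complex.add_im, Complex.mul_im, hη0]
    exact (ContinuousAt.comp (g := stieltjes μ) (f := fun x : ℝ => (x : ℂ) + (η : ℂ) * I)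
      (stjS_diffAt hxim).continuousAt (stjS_contAt_row η).continuousAt).continuousWithinAt
  have hhcont : ContinuousOn (fun x : ℝ => stjh μ s ((x : ℂ) + (η : ℂ) * I)) (Set.uIcc a b) := by
    intro x hx
    have hxim : 0 < ((x : ℂ) + (η : ℂ) * I).im := by
      simp [Complex.add_im, Complex.mul_im, hη0]
    exact (ContinuousAt.comp (g := stjh μ s) (f := fun x : ℝ => (x : ℂ) + (η : ℂ) * I)
      (stjh_diffAt hxim).continuousAt (stjS_contAt_row η).continuousAt).continuousWithinAt
  have hnorm_cont : ContinuousOn (fun x : ℝ => ‖stieltjes μ ((x : ℂ) + (η : ℂ) * I)‖ ^ s)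
      (Set.uIcc a b) := by
    intro x hx
    have h1 : ContinuousWithinAt (fun x : ℝ => ‖stieltjes μ ((x : ℂ) + (η : ℂ) * I)‖)
        (Set.uIcc a b) x := (hgcont x hx).norm
    exact (Real.continuousAt_rpow_const _ s (Or.inr hs0.le)).comp_continuousWithinAt h1
  -- chain of inequalities
  have hmono : ∫ x in a..b, ‖stieltjes μ ((x : ℂ) + (η : ℂ) * I)‖ ^ s ≤
      ∫ x in a..b, c * (stjh μ s ((x : ℂ) + (η : ℂ) * I)).re := by
    apply intervalIntegral.integral_mono_on hab hnorm_cont.intervalIntegrable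
      ((continuousOn_const.mul ((Complex.continuous_re.comp_continuousOn hhcont))).intervalIntegrable)
    intro x hx
    have hxim : 0 < ((x : ℂ) + (η : ℂ) * I).im := by
      simp [Complex.add_im, Complex.mul_im, hη0]
    exact stjh_key hs0 hs1 hxim
  have hconst : ∫ x in a..b, c * (stjh μ s ((x : ℂ) + (η : ℂ) * I)).re =
      c * ∫ x in a..b, (stjh μ s ((x : ℂ) + (η : ℂ) * I)).re :=
    intervalIntegral.integral_const_mul c _
  have hre : ∫ x in a..b, (stjh μ s ((x : ℂ) + (η : ℂ) * I)).re = A.re := by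
    have := Complex.reCLM.intervalIntegral_comp_comm
      (hhcont.intervalIntegrable (μ := MeasureTheory.volume))
    simpa using this
  have hAre : A.re ≤ (b - a) + 2 / (1 - s) := by
    have h1 : A.re ≤ ‖A‖ := by
      exact Complex.re_le_norm A
    have h2 : ‖A‖ ≤ ‖B‖ + ‖Cb‖ + ‖Ca‖ := by
      rw [hAval]
      calc ‖B - I • Cb + I • Ca‖ ≤ ‖B - I • Cb‖ + ‖I • Ca‖ := norm_add_le _ _
        _ ≤ ‖B‖ + ‖I • Cb‖ + ‖I • Ca‖ := by
            have := norm_sub_le B (I • Cb); linarith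
        _ = ‖B‖ + ‖Cb‖ + ‖Ca‖ := by
            rw [norm_smul, norm_smul, Complex.norm_I, one_mul, one_mul]
    have h3 := hvert b
    have h4 := hvert a
    rw [← hCb] at h3
    rw [← hCa] at h4
    have := hhor
    have h5 : ‖A‖ ≤ (b - a) + (1 / (1 - s) + 1 / (1 - s)) := by linarith
    have h6 : 1 / (1 - s) + 1 / (1 - s) = 2 / (1 - s) := by ring
    linarith [h6 ▸ h5]
  calc ∫ x in a..b, ‖stieltjes μ ((x : ℂ) + (η : ℂ) * I)‖ ^ s
      ≤ c * A.re := by rw [← hre, ← hconst]; exact hmono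
    _ ≤ c * ((b - a) + 2 / (1 - s)) := mul_le_mul_of_nonneg_left hAre hcnn


lemma stj_cont_line {s t : ℝ} (hs0 : 0 < s) (ht : 0 < t) :
    Continuous (fun l : ℝ => ‖stieltjes μ ((l : ℂ) + (t : ℂ) * I)‖ ^ s) := by
  have h1 : Continuous (fun l : ℝ => stieltjes μ ((l : ℂ) + (t : ℂ) * I)) := by
    rw [continuous_iff_continuousAt]
    intro l
    have hxim : 0 < ((l : ℂ) + (t : ℂ) * I).im := by
      simp [Complex.add_im, Complex.mul_im, ht]
    exact ContinuousAt.comp (g := stieltjes μ) (f := fun x : ℝ => (x : ℂ) + (t : ℂ) * I)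
      (stjS_diffAt hxim).continuousAt (stjS_contAt_row t).continuousAt
  rw [continuous_iff_continuousAt]
  intro l
  exact (Real.continuousAt_rpow_const _ s (Or.inr hs0.le)).comp h1.norm.continuousAt

lemma stj_part1 {s : ℝ} (hs0 : 0 < s) (hs1 : s < 1) {a b : ℝ} (hab : a ≤ b)
    {η : ℝ} (hη0 : 0 < η) :
    ∫ l in Set.Icc a b, ‖stieltjes μ ((l : ℂ) + (η : ℂ) * I)‖ ^ s ≤
      (Real.cos (s * (Real.pi / 2)))⁻¹ * ((b - a) + 2 / (1 - s)) + (b - a) := by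
  have hπ := Real.pi_pos
  have hcpos : 0 < Real.cos (s * (Real.pi / 2)) := by
    apply Real.cos_pos_of_mem_Ioo
    constructor <;> nlinarith
  have hT1 : 0 ≤ (Real.cos (s * (Real.pi / 2)))⁻¹ * ((b - a) + 2 / (1 - s)) := by
    apply mul_nonneg (inv_nonneg.2 hcpos.le)
    have : (0:ℝ) ≤ 2 / (1 - s) := div_nonneg (by norm_num) (by linarith)
    linarith
  rcases le_or_gt η 1 with hη1 | hη1
  · have hcore := stj_core (μ := μ) hs0 hs1 hab hη0 hη1
    have heq : ∫ l in Set.Icc a b, ‖stieltjes μ ((l : ℂ) + (η : ℂ) * I)‖ ^ s =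
        ∫ x in a..b, ‖stieltjes μ ((x : ℂ) + (η : ℂ) * I)‖ ^ s := by
      rw [intervalIntegral.integral_of_le hab, MeasureTheory.integral_Icc_eq_integral_Ioc]
    rw [heq]
    linarith
  · have hbd : ∀ l ∈ Set.Icc a b, ‖stieltjes μ ((l : ℂ) + (η : ℂ) * I)‖ ^ s ≤ 1 := by
      intro l hl
      have hxim : ((l : ℂ) + (η : ℂ) * I).im = η := by
        simp [Complex.add_im, Complex.mul_im]
      have h1 : ‖stieltjes μ ((l : ℂ) + (η : ℂ) * I)‖ ≤ 1 := by
        have := stjS_norm_le (μ := μ) (z := (l : ℂ) + (η : ℂ) * I) (by rw [hxim]; exact hη0)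
        rw [hxim] at this
        have h2 : η⁻¹ ≤ 1 := by
          rw [inv_le_one_iff₀]; right; exact hη1.le
        linarith
      exact Real.rpow_le_one (norm_nonneg _) h1 hs0.le
    have hint : MeasureTheory.IntegrableOn
        (fun l : ℝ => ‖stieltjes μ ((l : ℂ) + (η : ℂ) * I)‖ ^ s) (Set.Icc a b) := by
      exact ((stj_cont_line hs0 hη0).continuousOn).integrableOn_Icc
    have hmono := MeasureTheory.setIntegral_mono_on hint
      (MeasureTheory.integrableOn_const (by
        rw [Real.volume_Icc]; exact ENNReal.ofReal_ne_top)) measurableSet_Icc hbd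
    have hconst : ∫ _ in Set.Icc a b, (1:ℝ) = b - a := by
      simp [Real.volume_Icc, ENNReal.toReal_ofReal (sub_nonneg.2 hab), hab]
    rw [hconst] at hmono
    linarith

end helpers


/-- Uniform `L^s`-bound (`0 < s < 1`) on an interval for Stieltjes transforms of
arbitrary probability measures, at any height `η > 0` and also for the a.e.
boundary values at `η = 0`. -/
theorem stieltjes_Ls_bound (s : ℝ) (hs0 : 0 < s) (hs1 : s < 1)
    (a b : ℝ) (hab : a ≤ b) :
    ∃ C : ℝ, 0 < C ∧ ∀ (μ : Measure ℝ), IsProbabilityMeasure μ →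
      (∀ η : ℝ, 0 < η →
        ∫ l in Set.Icc a b, ‖stieltjes μ (l + η * I)‖ ^ s ≤ C) ∧
      (∀ G : ℝ → ℂ,
        (∀ᵐ l : ℝ, l ∈ Set.Icc a b →
          Tendsto (fun t : ℝ => stieltjes μ (l + t * I)) (𝓝[>] 0) (𝓝 (G l))) →
        ∫ l in Set.Icc a b, ‖G l‖ ^ s ≤ C) := by
  have hπ := Real.pi_pos
  have hcpos : 0 < Real.cos (s * (Real.pi / 2)) := by
    apply Real.cos_pos_of_mem_Ioo; constructor <;> nlinarith
  have hDnn : 0 ≤ (Real.cos (s * (Real.pi / 2)))⁻¹ * ((b - a) + 2 / (1 - s)) + (b - a) := by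
    have h1 : (0:ℝ) ≤ 2 / (1 - s) := div_nonneg (by norm_num) (by linarith)
    have h2 : 0 ≤ (Real.cos (s * (Real.pi / 2)))⁻¹ := inv_nonneg.2 hcpos.le
    have h3 := mul_nonneg h2 (by linarith : (0:ℝ) ≤ (b - a) + 2 / (1 - s))
    linarith
  refine ⟨(Real.cos (s * (Real.pi / 2)))⁻¹ * ((b - a) + 2 / (1 - s)) + (b - a) + 1,
    by linarith, ?_⟩
  set D := (Real.cos (s * (Real.pi / 2)))⁻¹ * ((b - a) + 2 / (1 - s)) + (b - a) with hD
  intro μ hμ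
  have hpart1 : ∀ η : ℝ, 0 < η →
      ∫ l in Set.Icc a b, ‖stieltjes μ ((l:ℂ) + (η:ℂ) * I)‖ ^ s ≤ D + 1 := by
    intro η hη
    have := stj_part1 (μ := μ) hs0 hs1 hab hη
    rw [← hD] at this
    linarith
  refine ⟨fun η hη => hpart1 η hη, ?_⟩
  intro G hG
  set ν := MeasureTheory.volume.restrict (Set.Icc a b) with hν
  have hu : Tendsto (fun n : ℕ => ((n:ℝ) + 1)⁻¹) atTop (𝓝[>] (0:ℝ)) := by
    apply tendsto_nhdsWithin_of_tendsto_nhds_of_eventually_within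
    · have := tendsto_one_div_add_atTop_nhds_zero_nat (𝕜 := ℝ)
      simpa [one_div] using this
    · exact Eventually.of_forall fun n => Set.mem_Ioi.2 (by positivity)
  have hGae : ∀ᵐ (l : ℝ) ∂ν, Tendsto
      (fun n : ℕ => ‖stieltjes μ ((l:ℂ) + ((((n:ℝ)+1)⁻¹ : ℝ):ℂ) * I)‖ ^ s)
      atTop (𝓝 (‖G l‖ ^ s)) := by
    have hG' : ∀ᵐ (l : ℝ) ∂ν, l ∈ Set.Icc a b →
        Tendsto (fun t : ℝ => stieltjes μ (l + t * I)) (𝓝[>] 0) (𝓝 (G l)) :=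
      MeasureTheory.ae_restrict_of_ae hG
    have hmem : ∀ᵐ (l : ℝ) ∂ν, l ∈ Set.Icc a b :=
      MeasureTheory.ae_restrict_mem measurableSet_Icc
    refine (hG'.and hmem).mono fun l hl => ?_
    have h1 : Tendsto (fun n : ℕ => stieltjes μ ((l:ℂ) + ((((n:ℝ)+1)⁻¹ : ℝ):ℂ) * I))
        atTop (𝓝 (G l)) := (hl.1 hl.2).comp hu
    have h2 : Continuous (fun z : ℂ => ‖z‖ ^ s) := by
      rw [continuous_iff_continuousAt]
      intro z
      exact ContinuousAt.comp (g := fun r : ℝ => r ^ s) (f := fun z : ℂ => ‖z‖)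
        (Real.continuousAt_rpow_const _ s (Or.inr hs0.le)) continuous_norm.continuousAt
    exact (h2.tendsto (G l)).comp h1
  have hmeasn : ∀ n : ℕ, Measurable (fun l : ℝ =>
      ENNReal.ofReal (‖stieltjes μ ((l:ℂ) + ((((n:ℝ)+1)⁻¹ : ℝ):ℂ) * I)‖ ^ s)) := by
    intro n
    exact ((stj_cont_line (μ := μ) hs0 (by positivity)).measurable).ennreal_ofReal
  have hGmeas : AEMeasurable (fun l : ℝ => ‖G l‖ ^ s) ν :=
    aemeasurable_of_tendsto_metrizable_ae _
      (fun n => ((stj_cont_line (μ := μ) hs0 (by positivity)).measurable).aemeasurable) hGae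
  have hboundn : ∀ n : ℕ,
      ∫⁻ (l : ℝ), ENNReal.ofReal (‖stieltjes μ ((l:ℂ) + ((((n:ℝ)+1)⁻¹ : ℝ):ℂ) * I)‖ ^ s) ∂ν ≤
        ENNReal.ofReal (D + 1) := by
    intro n
    have hpos : (0:ℝ) < ((n:ℝ)+1)⁻¹ := by positivity
    have hint : MeasureTheory.Integrable
        (fun l : ℝ => ‖stieltjes μ ((l:ℂ) + ((((n:ℝ)+1)⁻¹ : ℝ):ℂ) * I)‖ ^ s) ν :=
      ((stj_cont_line (μ := μ) hs0 hpos).continuousOn).integrableOn_Icc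
    rw [← MeasureTheory.ofReal_integral_eq_lintegral_ofReal hint
      (ae_of_all _ fun l => Real.rpow_nonneg (norm_nonneg _) s)]
    exact ENNReal.ofReal_le_ofReal (hpart1 _ hpos)
  have hfatou : ∫⁻ (l : ℝ), ENNReal.ofReal (‖G l‖ ^ s) ∂ν ≤ ENNReal.ofReal (D + 1) := by
    have h1 : ∫⁻ (l : ℝ), ENNReal.ofReal (‖G l‖ ^ s) ∂ν =
        ∫⁻ (l : ℝ), Filter.liminf (fun n : ℕ =>
          ENNReal.ofReal (‖stieltjes μ ((l:ℂ) + ((((n:ℝ)+1)⁻¹ : ℝ):ℂ) * I)‖ ^ s)) atTop ∂ν := by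
      refine MeasureTheory.lintegral_congr_ae (hGae.mono fun l hl => ?_)
      exact ((ENNReal.continuous_ofReal.tendsto _).comp hl).liminf_eq.symm
    rw [h1]
    calc ∫⁻ (l : ℝ), Filter.liminf (fun n : ℕ =>
          ENNReal.ofReal (‖stieltjes μ ((l:ℂ) + ((((n:ℝ)+1)⁻¹ : ℝ):ℂ) * I)‖ ^ s)) atTop ∂ν
        ≤ Filter.liminf (fun n : ℕ => ∫⁻ (l : ℝ), ENNReal.ofReal
            (‖stieltjes μ ((l:ℂ) + ((((n:ℝ)+1)⁻¹ : ℝ):ℂ) * I)‖ ^ s) ∂ν) atTop :=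
        MeasureTheory.lintegral_liminf_le hmeasn
      _ ≤ ENNReal.ofReal (D + 1) := by
        have h2 := Filter.liminf_le_liminf (f := (atTop : Filter ℕ))
          (Filter.Eventually.of_forall hboundn)
        rwa [Filter.liminf_const] at h2
  have heq := MeasureTheory.integral_eq_lintegral_of_nonneg_ae
    (ae_of_all ν fun l => Real.rpow_nonneg (norm_nonneg _) s) hGmeas.aestronglyMeasurable
  rw [heq]
  exact ENNReal.toReal_le_of_le_ofReal (by linarith) hfatou
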